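/- Let (X,‖·‖_X) be a dual Banach space equipped with the weak-* topology, with predual (E,‖·‖_E) and isometric isomorphism Φ: X → E*, and let ψ(x) = η(‖x‖_X) be an admissible weight function on X, where η: [0,∞) → (0,∞) is continuous and non-decreasing with lim_{r→∞} r/η(r) = 0. Then the set 𝓗 := { x ↦ Φ(x)(e) + b : e ∈ E, b ∈ ℝ } is contained in 𝓑_ψ(X) and is an additive family on X, i.e. it is closed under addition, point separating, and contains the constant functions. -/

import Mathlib

open Filter Topology

/-- `f` belongs to `𝓑_ψ(X)` where `X` carries the topology `τ`:  the closure of the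
bounded `τ`-continuous functions with respect to the weighted norm
`‖f‖ = sup_x |f x| / ψ x`. -/
def MemBpsiT {X : Type*} (τ : TopologicalSpace X) (ψ : X → ℝ) (f : X → ℝ) : Prop :=
  ∀ ε > (0 : ℝ), ∃ g : X → ℝ, Continuous[τ, inferInstance] g ∧ (∃ C : ℝ, ∀ x, |g x| ≤ C) ∧
    ∀ x, |f x - g x| ≤ ε * ψ x

/-- Clamping a real number to `[-M, M]` changes it by at most `|t|`. -/
lemma clamp_err (M t : ℝ) (hM : 0 ≤ M) : |t - max (-M) (min M t)| ≤ |t| := by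
  rcases le_total t M with h1 | h1
  · rw [min_eq_right h1]
    rcases le_total (-M) t with h2 | h2
    · rw [max_eq_right h2, sub_self, abs_zero]; exact abs_nonneg t
    · rw [max_eq_left h2, abs_le]
      constructor <;> [skip; skip] <;> nlinarith [neg_abs_le t, le_abs_self t]
  · rw [min_eq_left h1, max_eq_right (by linarith : -M ≤ M), abs_le]
    constructor <;> nlinarith [neg_abs_le t, le_abs_self t]

/-- If `|t| ≤ M` then clamping does nothing. -/
lemma clamp_eq (M t : ℝ) (ht : |t| ≤ M) : max (-M) (min M t) = t := by
  rw [min_eq_right (abs_le.mp ht).2, max_eq_right (abs_le.mp ht).1]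

/-- The clamped evaluation map is continuous for the induced topology. -/
lemma clamp_eval_continuous {X E : Type*} [NormedAddCommGroup E] [NormedSpace ℝ E]
    (f : X → (E → ℝ)) (e : E) (M b : ℝ) :
    Continuous[TopologicalSpace.induced f Pi.topologicalSpace, inferInstance]
      (fun x => max (-M) (min M (f x e + b))) := by
  letI : TopologicalSpace X := TopologicalSpace.induced f Pi.topologicalSpace
  exact continuous_const.max (continuous_const.min
    ((show Continuous (fun x => f x e) from
      (continuous_apply (A := fun _ : E => ℝ) e).comp continuous_induced_dom).add continuous_const))

theorem weakstar_dual_additive_family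
    {X E : Type*} [NormedAddCommGroup X] [NormedSpace ℝ X] [CompleteSpace X]
    [NormedAddCommGroup E] [NormedSpace ℝ E] [CompleteSpace E]
    (Φ : X ≃ₗᵢ[ℝ] StrongDual ℝ E)
    (τw : TopologicalSpace X)
    (hτw : τw = TopologicalSpace.induced (fun (x : X) (e : E) => Φ x e) Pi.topologicalSpace)
    (η : ℝ → ℝ)
    (hηcont : ContinuousOn η (Set.Ici 0))
    (hηmono : MonotoneOn η (Set.Ici 0))
    (hηpos : ∀ r ∈ Set.Ici (0 : ℝ), 0 < η r)
    (hηlim : Tendsto (fun r => r / η r) atTop (𝓝 0))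
    (hadm : ∀ R > 0, @IsCompact X τw {x : X | η ‖x‖ ≤ R}) :
    (∀ h ∈ {h : X → ℝ | ∃ (e : E) (b : ℝ), h = fun x => Φ x e + b},
      MemBpsiT τw (fun x => η ‖x‖) h) ∧
    (∀ h₁ ∈ {h : X → ℝ | ∃ (e : E) (b : ℝ), h = fun x => Φ x e + b},
     ∀ h₂ ∈ {h : X → ℝ | ∃ (e : E) (b : ℝ), h = fun x => Φ x e + b},
      h₁ + h₂ ∈ {h : X → ℝ | ∃ (e : E) (b : ℝ), h = fun x => Φ x e + b}) ∧
    (∀ x₁ x₂ : X, x₁ ≠ x₂ →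
      ∃ h ∈ {h : X → ℝ | ∃ (e : E) (b : ℝ), h = fun x => Φ x e + b}, h x₁ ≠ h x₂) ∧
    (∀ b : ℝ,
      (fun _ : X => b) ∈ {h : X → ℝ | ∃ (e : E) (b : ℝ), h = fun x => Φ x e + b}) := by
  refine ⟨?_, ?_, ?_, ?_⟩
  · -- membership in 𝓑_ψ(X)
    rintro h ⟨e, b, rfl⟩ ε hε
    have hden : (0:ℝ) < ‖e‖ + |b| + 1 := by positivity
    set δ : ℝ := ε / (‖e‖ + |b| + 1) with hδdef
    have hδ : 0 < δ := div_pos hε hden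
    have hev : ∀ᶠ r in atTop, dist (r / η r) 0 < δ :=
      hηlim (Metric.ball_mem_nhds 0 hδ)
    obtain ⟨R₀, hR₀⟩ := eventually_atTop.mp hev
    set R : ℝ := max R₀ 1 with hRdef
    have hR1 : (1:ℝ) ≤ R := le_max_right _ _
    have hR0 : (0:ℝ) ≤ R := by linarith
    set M : ℝ := ‖e‖ * R + |b| with hMdef
    have hM : 0 ≤ M := by positivity
    refine ⟨fun x => max (-M) (min M (Φ x e + b)), ?_, ⟨M, ?_⟩, ?_⟩
    · -- continuity
      subst hτw
      exact clamp_eval_continuous (fun (x : X) (e : E) => Φ x e) e M b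
    · intro x
      rw [abs_le]
      constructor
      · exact le_max_left _ _
      · exact max_le (by linarith) (min_le_left _ _)
    · intro x
      show |Φ x e + b - max (-M) (min M (Φ x e + b))| ≤ ε * η ‖x‖
      have hx0 : (0:ℝ) ≤ ‖x‖ := norm_nonneg x
      have hηx : 0 < η ‖x‖ := hηpos _ hx0
      have hbound : |Φ x e + b| ≤ ‖e‖ * ‖x‖ + |b| := by
        calc |Φ x e + b| ≤ |Φ x e| + |b| := abs_add_le _ _
          _ ≤ ‖Φ x‖ * ‖e‖ + |b| := by
              have := (Φ x).le_opNorm e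
              rw [← Real.norm_eq_abs (Φ x e)] at *
              linarith [this]
          _ = ‖e‖ * ‖x‖ + |b| := by rw [Φ.norm_map]; ring
      rcases le_or_gt ‖x‖ R with hxR | hxR
      · -- small norm: clamp does nothing
        have : |Φ x e + b| ≤ M := by
          have : ‖e‖ * ‖x‖ ≤ ‖e‖ * R := by
            exact mul_le_mul_of_nonneg_left hxR (norm_nonneg e)
          rw [hMdef]; linarith [hbound]
        rw [clamp_eq M _ this, sub_self, abs_zero]
        positivity
      · -- large norm
        have hdist : dist (‖x‖ / η ‖x‖) 0 < δ := hR₀ ‖x‖ (le_of_lt (lt_of_le_of_lt (le_max_left _ _) hxR))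
        rw [Real.dist_eq, sub_zero, abs_div, abs_of_nonneg hx0, abs_of_pos hηx] at hdist
        have hkey : ‖x‖ < δ * η ‖x‖ := by
          rwa [div_lt_iff₀ hηx] at hdist
        have hδeq : (‖e‖ + |b| + 1) * δ = ε := by
          rw [hδdef]; field_simp
        calc |Φ x e + b - max (-M) (min M (Φ x e + b))| ≤ |Φ x e + b| :=
              clamp_err M _ hM
          _ ≤ ‖e‖ * ‖x‖ + |b| := hbound
          _ ≤ (‖e‖ + |b|) * ‖x‖ := by nlinarith [abs_nonneg b, hR1, hxR]
          _ ≤ (‖e‖ + |b| + 1) * ‖x‖ := by nlinarith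
          _ ≤ (‖e‖ + |b| + 1) * (δ * η ‖x‖) := by nlinarith [hkey, hden]
          _ = ε * η ‖x‖ := by rw [← mul_assoc, hδeq]
  · -- closed under addition
    rintro h₁ ⟨e₁, b₁, rfl⟩ h₂ ⟨e₂, b₂, rfl⟩
    exact ⟨e₁ + e₂, b₁ + b₂, by funext x; simp [map_add]; ring⟩
  · -- point separating
    intro x₁ x₂ hne
    have hΦ : Φ x₁ ≠ Φ x₂ := fun h => hne (Φ.injective h)
    obtain ⟨e, he⟩ : ∃ e, Φ x₁ e ≠ Φ x₂ e := by
      by_contra hc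
      push_neg at hc
      exact hΦ (ContinuousLinearMap.ext hc)
    exact ⟨fun x => Φ x e + 0, ⟨e, 0, rfl⟩, by simpa using he⟩
  · -- constants
    intro b
    exact ⟨0, b, by funext x; simp⟩
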